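/- Suppose f and u'' are both logconcave, and let (0 = s₀ < s₁ < … < s_N = 1; x₁,…,x_N) be a solution of the dual system for some N ≥ 2. Define the interleaved sequence Δ₁,…,Δ_{2N−1} by Δ_{2k−1} = s_k − s_{k−1} for k = 1,…,N and Δ_{2k} = x_{k+1} − x_k for k = 1,…,N−1. Then Δ is single-dipped: for every i with 2 ≤ i ≤ 2N−2, Δ_i ≥ Δ_{i−1} implies Δ_{i+1} ≥ Δ_i. -/

import Mathlib

open MeasureTheory Set

/-- The mean of the "density" `g` conditional on the interval `(a, b)`. -/
noncomputable def condMean (g : ℝ → ℝ) (a b : ℝ) : ℝ :=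
  (∫ t in a..b, t * g t) / (∫ t in a..b, g t)

/-- A strictly positive function on `[0,1]` is logconcave if its log is concave there. -/
def LogConcaveOn01 (g : ℝ → ℝ) : Prop :=
  ConcaveOn ℝ (Icc (0:ℝ) 1) fun t => Real.log (g t)

/-- The dual system: cutoffs `0 = s 0 < s 1 < … < s N = 1` and signals `x 1, …, x N`. -/
def DualSystem (g w : ℝ → ℝ) (N : ℕ) (s x : ℕ → ℝ) : Prop :=
  s 0 = 0 ∧ s N = 1 ∧ (∀ k < N, s k < s (k + 1)) ∧
    (∀ k, 1 ≤ k → k ≤ N → x k = condMean g (s (k - 1)) (s k)) ∧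
    (∀ k, 1 ≤ k → k ≤ N - 1 → s k = condMean w (x k) (x (k + 1)))

/-- The interleaved sequence `Δ`:
`Δ (2k-1) = s k - s (k-1)` (interval widths) and `Δ (2k) = x (k+1) - x k`
(distances between adjacent posterior means). -/
noncomputable def interleaved (s x : ℕ → ℝ) (i : ℕ) : ℝ :=
  if i % 2 = 1 then s ((i + 1) / 2) - s ((i + 1) / 2 - 1)
  else x (i / 2 + 1) - x (i / 2)

/-! ### Auxiliary lemmas -/

section Auxiliary

open intervalIntegral

variable {g : ℝ → ℝ}

/-- Four-point inequality from concavity of `log g`. -/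
lemma four_point (hlc : ConcaveOn ℝ (Icc (0:ℝ) 1) (fun t => Real.log (g t)))
    (hgpos : ∀ t ∈ Icc (0:ℝ) 1, 0 < g t)
    {α β ω : ℝ} (h0 : 0 ≤ α) (h1 : ω ≤ 1) (hαβ : α ≤ β) (hβω : β ≤ ω) :
    g α * g ω ≤ g β * g (α + ω - β) := by
  set γ := α + ω - β with hγ
  have hαω : α ≤ ω := le_trans hαβ hβω
  have hγmem : α ≤ γ ∧ γ ≤ ω := by constructor <;> simp only [hγ] <;> linarith
  have hmemα : α ∈ Icc (0:ℝ) 1 := ⟨h0, le_trans hαω h1⟩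
  have hmemω : ω ∈ Icc (0:ℝ) 1 := ⟨le_trans h0 hαω, h1⟩
  have hmemβ : β ∈ Icc (0:ℝ) 1 := ⟨le_trans h0 hαβ, le_trans hβω h1⟩
  have hmemγ : γ ∈ Icc (0:ℝ) 1 := ⟨le_trans h0 hγmem.1, le_trans hγmem.2 h1⟩
  rcases eq_or_lt_of_le hαω with h | h
  · have hβ : β = α := le_antisymm (h ▸ hβω) hαβ
    have hγ2 : γ = ω := by simp [hγ, hβ]
    rw [hβ, hγ2]
  · set lam := (ω - β)/(ω - α) with hlam
    have hd : (0:ℝ) < ω - α := by linarith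
    have hlam0 : 0 ≤ lam := div_nonneg (by linarith) hd.le
    have hlam1 : lam ≤ 1 := by rw [div_le_one hd]; linarith
    have hβeq : lam • α + (1 - lam) • ω = β := by
      have hne : ω - α ≠ 0 := ne_of_gt hd
      rw [smul_eq_mul, smul_eq_mul, hlam]; field_simp; ring
    have hγeq : (1 - lam) • α + lam • ω = γ := by
      have hne : ω - α ≠ 0 := ne_of_gt hd
      rw [smul_eq_mul, smul_eq_mul, hlam, hγ]; field_simp; ring
    have c1 := hlc.2 hmemα hmemω hlam0 (by linarith : (0:ℝ) ≤ 1 - lam) (by ring)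
    have c2 := hlc.2 hmemα hmemω (by linarith : (0:ℝ) ≤ 1 - lam) hlam0 (by ring)
    rw [hβeq] at c1
    rw [hγeq] at c2
    have hsum : Real.log (g α) + Real.log (g ω) ≤ Real.log (g β) + Real.log (g γ) := by
      simp only [smul_eq_mul] at c1 c2
      linarith
    have e1 : g α * g ω = Real.exp (Real.log (g α) + Real.log (g ω)) := by
      rw [Real.exp_add, Real.exp_log (hgpos _ hmemα), Real.exp_log (hgpos _ hmemω)]
    have e2 : g β * g γ = Real.exp (Real.log (g β) + Real.log (g γ)) := by
      rw [Real.exp_add, Real.exp_log (hgpos _ hmemβ), Real.exp_log (hgpos _ hmemγ)]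
    rw [e1, e2]
    exact Real.exp_le_exp.2 hsum

lemma cont_tg (hg : Continuous g) : Continuous fun t => t * g t :=
  continuous_id.mul hg

lemma int_pos (hg : Continuous g) (hgpos : ∀ t ∈ Icc (0:ℝ) 1, 0 < g t)
    {a b : ℝ} (h0 : 0 ≤ a) (hab : a < b) (h1 : b ≤ 1) :
    0 < ∫ t in a..b, g t := by
  apply intervalIntegral_pos_of_pos_on (hg.intervalIntegrable a b)
  · exact fun x hx => hgpos x ⟨by linarith [hx.1], by linarith [hx.2]⟩
  · exact hab

lemma sub_mul_integral (hg : Continuous g) (a b c : ℝ) :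
    (∫ t in a..b, (t - c) * g t) = (∫ t in a..b, t * g t) - c * ∫ t in a..b, g t := by
  have h : ∀ t, (t - c) * g t = t * g t - c * g t := fun t => by ring
  simp only [h]
  rw [intervalIntegral.integral_sub ((cont_tg hg).intervalIntegrable a b)
    ((show Continuous (fun t => c * g t) from continuous_const.mul hg).intervalIntegrable a b),
    intervalIntegral.integral_const_mul]

lemma int_shift_pos (hg : Continuous g) (hgpos : ∀ t ∈ Icc (0:ℝ) 1, 0 < g t)
    {a b : ℝ} (c : ℝ) (h0 : 0 ≤ a) (hab : a < b) (h1 : b ≤ 1)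
    (hc : ∀ t ∈ Ioo a b, 0 < t - c) :
    0 < ∫ t in a..b, (t - c) * g t := by
  apply intervalIntegral_pos_of_pos_on
    (((continuous_id.sub continuous_const).mul hg).intervalIntegrable a b)
  · exact fun x hx => mul_pos (hc x hx) (hgpos x ⟨by linarith [hx.1], by linarith [hx.2]⟩)
  · exact hab

lemma int_shift_neg (hg : Continuous g) (hgpos : ∀ t ∈ Icc (0:ℝ) 1, 0 < g t)
    {a b : ℝ} (c : ℝ) (h0 : 0 ≤ a) (hab : a < b) (h1 : b ≤ 1)
    (hc : ∀ t ∈ Ioo a b, t - c < 0) :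
    (∫ t in a..b, (t - c) * g t) < 0 := by
  have h1' : 0 < ∫ t in a..b, (c - t) * g t := by
    apply intervalIntegral_pos_of_pos_on
      (((continuous_const.sub continuous_id).mul hg).intervalIntegrable a b)
    · exact fun x hx => mul_pos (by have := hc x hx; show 0 < c - x; linarith)
        (hgpos x ⟨by linarith [hx.1], by linarith [hx.2]⟩)
    · exact hab
  have heq : (∫ t in a..b, (c - t) * g t) = - ∫ t in a..b, (t - c) * g t := by
    rw [← intervalIntegral.integral_neg]
    congr 1; ext t; ring
  rw [heq] at h1'
  linarith

lemma mean_gt (hg : Continuous g) (hgpos : ∀ t ∈ Icc (0:ℝ) 1, 0 < g t)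
    {a b : ℝ} (h0 : 0 ≤ a) (hab : a < b) (h1 : b ≤ 1) :
    a < condMean g a b := by
  have hI := int_pos hg hgpos h0 hab h1
  rw [condMean, lt_div_iff₀ hI]
  have := int_shift_pos hg hgpos a h0 hab h1 (fun t ht => by linarith [ht.1])
  rw [sub_mul_integral hg] at this
  linarith

lemma mean_lt (hg : Continuous g) (hgpos : ∀ t ∈ Icc (0:ℝ) 1, 0 < g t)
    {a b : ℝ} (h0 : 0 ≤ a) (hab : a < b) (h1 : b ≤ 1) :
    condMean g a b < b := by
  have hI := int_pos hg hgpos h0 hab h1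
  rw [condMean, div_lt_iff₀ hI]
  have := int_shift_neg hg hgpos b h0 hab h1 (fun t ht => by linarith [ht.2])
  rw [sub_mul_integral hg] at this
  linarith

lemma mean_strict_right (hg : Continuous g) (hgpos : ∀ t ∈ Icc (0:ℝ) 1, 0 < g t)
    {a b b' : ℝ} (h0 : 0 ≤ a) (hab : a < b) (hbb' : b < b') (h1 : b' ≤ 1) :
    condMean g a b < condMean g a b' := by
  have hb1 : b ≤ 1 := le_of_lt (lt_of_lt_of_le hbb' h1)
  have hIa : 0 < ∫ t in a..b, g t := int_pos hg hgpos h0 hab hb1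
  have hIa' : 0 < ∫ t in a..b', g t := int_pos hg hgpos h0 (hab.trans hbb') h1
  have hS0 : 0 < ∫ t in b..b', g t := int_pos hg hgpos (h0.trans hab.le) hbb' h1
  rw [condMean, condMean, div_lt_div_iff₀ hIa hIa']
  have hsplit : (∫ t in a..b', g t) = (∫ t in a..b, g t) + ∫ t in b..b', g t := by
    rw [intervalIntegral.integral_add_adjacent_intervals (hg.intervalIntegrable a b)
      (hg.intervalIntegrable b b')]
  have hsplit' : (∫ t in a..b', t * g t)
      = (∫ t in a..b, t * g t) + ∫ t in b..b', t * g t := by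
    rw [intervalIntegral.integral_add_adjacent_intervals
      ((cont_tg hg).intervalIntegrable a b) ((cont_tg hg).intervalIntegrable b b')]
  have hT : (∫ t in a..b, t * g t) < b * ∫ t in a..b, g t := by
    have := int_shift_neg hg hgpos b h0 hab hb1 (fun t ht => by linarith [ht.2])
    rw [sub_mul_integral hg] at this; linarith
  have hS1 : b * (∫ t in b..b', g t) ≤ ∫ t in b..b', t * g t := by
    have h2 : 0 ≤ ∫ t in b..b', (t - b) * g t := by
      apply intervalIntegral.integral_nonneg hbb'.le
      intro t ht
      exact mul_nonneg (by linarith [ht.1])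
        (le_of_lt (hgpos t ⟨by linarith [ht.1, h0, hab], by linarith [ht.2]⟩))
    rw [sub_mul_integral hg] at h2; linarith
  rw [hsplit, hsplit']
  nlinarith [hT, hS1, hS0, hIa]

/-- Monotone-likelihood-ratio comparison of conditional means. -/
lemma mlr {g₁ g₂ : ℝ → ℝ} (h₁ : Continuous g₁) (h₂ : Continuous g₂)
    {a b : ℝ} (hab : a < b)
    (hpos₁ : 0 < ∫ t in a..b, g₁ t) (hpos₂ : 0 < ∫ t in a..b, g₂ t)
    (hratio : ∀ s t, a ≤ s → s ≤ t → t ≤ b → g₁ t * g₂ s ≤ g₁ s * g₂ t) :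
    condMean g₁ a b ≤ condMean g₂ a b := by
  set I01 := ∫ t in a..b, g₁ t with hI01
  set I02 := ∫ t in a..b, g₂ t with hI02
  set I11 := ∫ t in a..b, t * g₁ t with hI11
  set I12 := ∫ t in a..b, t * g₂ t with hI12
  have hc1 : Continuous fun t => t * g₁ t := continuous_id.mul h₁
  have hc2 : Continuous fun t => t * g₂ t := continuous_id.mul h₂
  have inner : ∀ s ∈ Icc a b,
      0 ≤ g₁ s * I12 - (s * g₁ s) * I02 - (g₂ s * I11 - (s * g₂ s) * I01) := by
    intro s hs
    have e : g₁ s * I12 - (s * g₁ s) * I02 - (g₂ s * I11 - (s * g₂ s) * I01)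
        = ∫ t in a..b, (t - s) * (g₂ t * g₁ s - g₁ t * g₂ s) := by
      have hfun : (fun t => (t - s) * (g₂ t * g₁ s - g₁ t * g₂ s))
          = fun t => (g₁ s * (t * g₂ t) - (s * g₁ s) * g₂ t)
              - (g₂ s * (t * g₁ t) - (s * g₂ s) * g₁ t) := by
        ext t; ring
      rw [hfun, intervalIntegral.integral_sub
          ((show Continuous (fun t => g₁ s * (t * g₂ t) - (s * g₁ s) * g₂ t) from
            (continuous_const.mul hc2).sub (continuous_const.mul h₂)).intervalIntegrable a b)
          ((show Continuous (fun t => g₂ s * (t * g₁ t) - (s * g₂ s) * g₁ t) from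
            (continuous_const.mul hc1).sub (continuous_const.mul h₁)).intervalIntegrable a b),
        intervalIntegral.integral_sub ((show Continuous (fun t => g₁ s * (t * g₂ t)) from
            continuous_const.mul hc2).intervalIntegrable a b)
          ((show Continuous (fun t => (s * g₁ s) * g₂ t) from
            continuous_const.mul h₂).intervalIntegrable a b),
        intervalIntegral.integral_sub ((show Continuous (fun t => g₂ s * (t * g₁ t)) from
            continuous_const.mul hc1).intervalIntegrable a b)
          ((show Continuous (fun t => (s * g₂ s) * g₁ t) from
            continuous_const.mul h₁).intervalIntegrable a b),
        intervalIntegral.integral_const_mul, intervalIntegral.integral_const_mul,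
        intervalIntegral.integral_const_mul, intervalIntegral.integral_const_mul]
    rw [e]
    have hcont : Continuous fun t => (t - s) * (g₂ t * g₁ s - g₁ t * g₂ s) :=
      (continuous_id.sub continuous_const).mul
        ((h₂.mul continuous_const).sub (h₁.mul continuous_const))
    rw [← intervalIntegral.integral_add_adjacent_intervals
      (hcont.intervalIntegrable a s) (hcont.intervalIntegrable s b)]
    have n1 : 0 ≤ ∫ t in a..s, (t - s) * (g₂ t * g₁ s - g₁ t * g₂ s) := by
      apply intervalIntegral.integral_nonneg hs.1
      intro t ht
      have hb : g₁ s * g₂ t ≤ g₁ t * g₂ s := hratio t s ht.1 ht.2 hs.2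
      have hbr : g₂ t * g₁ s - g₁ t * g₂ s ≤ 0 := by linarith
      exact mul_nonneg_of_nonpos_of_nonpos (by linarith [ht.2]) hbr
    have n2 : 0 ≤ ∫ t in s..b, (t - s) * (g₂ t * g₁ s - g₁ t * g₂ s) := by
      apply intervalIntegral.integral_nonneg hs.2
      intro t ht
      have hb : g₁ t * g₂ s ≤ g₁ s * g₂ t := hratio s t hs.1 ht.1 ht.2
      exact mul_nonneg (by linarith [ht.1]) (by linarith)
    linarith
  have outer : (∫ s in a..b,
      (g₁ s * I12 - (s * g₁ s) * I02 - (g₂ s * I11 - (s * g₂ s) * I01)))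
      = (I12 * I01 - I11 * I02) + (I12 * I01 - I11 * I02) := by
    have hfun : (fun s => g₁ s * I12 - (s * g₁ s) * I02 - (g₂ s * I11 - (s * g₂ s) * I01))
        = fun s => (g₁ s * I12 - (s * g₁ s) * I02) - (g₂ s * I11 - (s * g₂ s) * I01) := by
      ext s; ring
    rw [hfun, intervalIntegral.integral_sub
        ((show Continuous (fun s => g₁ s * I12 - (s * g₁ s) * I02) from
        (h₁.mul continuous_const).sub (hc1.mul continuous_const)).intervalIntegrable a b)
        ((show Continuous (fun s => g₂ s * I11 - (s * g₂ s) * I01) from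
        (h₂.mul continuous_const).sub (hc2.mul continuous_const)).intervalIntegrable a b),
      intervalIntegral.integral_sub ((show Continuous (fun s => g₁ s * I12) from
        h₁.mul continuous_const).intervalIntegrable a b)
        ((show Continuous (fun s => (s * g₁ s) * I02) from
        hc1.mul continuous_const).intervalIntegrable a b),
      intervalIntegral.integral_sub ((show Continuous (fun s => g₂ s * I11) from
        h₂.mul continuous_const).intervalIntegrable a b)
        ((show Continuous (fun s => (s * g₂ s) * I01) from
        hc2.mul continuous_const).intervalIntegrable a b),
      intervalIntegral.integral_mul_const, intervalIntegral.integral_mul_const,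
      intervalIntegral.integral_mul_const, intervalIntegral.integral_mul_const]
    ring
  have key : 0 ≤ I12 * I01 - I11 * I02 := by
    have h0 : 0 ≤ ∫ s in a..b,
        (g₁ s * I12 - (s * g₁ s) * I02 - (g₂ s * I11 - (s * g₂ s) * I01)) :=
      intervalIntegral.integral_nonneg hab.le inner
    rw [outer] at h0
    linarith
  rw [condMean, condMean, div_le_div_iff₀ hpos₁ hpos₂]
  linarith

/-- Shifting an interval to the right decreases the offset of the conditional mean,
for a logconcave density. -/
lemma shift_mean (hg : Continuous g) (hgpos : ∀ t ∈ Icc (0:ℝ) 1, 0 < g t)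
    (hlc : ConcaveOn ℝ (Icc (0:ℝ) 1) (fun t => Real.log (g t)))
    {a b δ : ℝ} (h0 : 0 ≤ a) (hab : a < b) (hδ : 0 ≤ δ) (h1 : b + δ ≤ 1) :
    condMean g (a + δ) (b + δ) ≤ condMean g a b + δ := by
  set h : ℝ → ℝ := fun v => g (v + δ) with hh
  have hhc : Continuous h := hg.comp (continuous_id.add continuous_const)
  have hden : (∫ v in a..b, h v) = ∫ v in a + δ..b + δ, g v :=
    intervalIntegral.integral_comp_add_right g δ
  have hposg : 0 < ∫ v in a + δ..b + δ, g v :=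
    int_pos hg hgpos (by linarith) (by linarith) h1
  have hposh : 0 < ∫ v in a..b, h v := by rw [hden]; exact hposg
  have hposg0 : 0 < ∫ v in a..b, g v := int_pos hg hgpos h0 hab (by linarith)
  have hnum : (∫ v in a..b, (v + δ) * g (v + δ)) = ∫ v in a + δ..b + δ, v * g v :=
    intervalIntegral.integral_comp_add_right (fun v => v * g v) δ
  have hnum2 : (∫ v in a..b, (v + δ) * g (v + δ))
      = (∫ v in a..b, v * h v) + δ * ∫ v in a..b, h v := by
    have hfun : (fun v => (v + δ) * g (v + δ)) = fun v => v * h v + δ * h v := by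
      ext v; simp only [hh]; ring
    have hInt1 : IntervalIntegrable (fun v => v * h v) volume a b :=
      (continuous_id.mul hhc).intervalIntegrable a b
    have hInt2 : IntervalIntegrable (fun v => δ * h v) volume a b :=
      (continuous_const.mul hhc).intervalIntegrable a b
    rw [hfun, intervalIntegral.integral_add hInt1 hInt2,
      intervalIntegral.integral_const_mul]
  have hmlr : condMean h a b ≤ condMean g a b := by
    apply mlr hhc hg hab hposh hposg0
    intro s t hs hst htb
    have h4 := four_point hlc hgpos (h0.trans hs) (by linarith : t + δ ≤ 1) hst
      (le_add_of_nonneg_right hδ : t ≤ t + δ)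
    have he : s + (t + δ) - t = s + δ := by ring
    rw [he] at h4
    simp only [hh]
    linear_combination h4
  have heq : condMean g (a + δ) (b + δ) = condMean h a b + δ := by
    rw [condMean, condMean, ← hnum, ← hden, hnum2, add_div, mul_div_assoc,
      div_self hposh.ne', mul_one]
  rw [heq]
  linarith

/-- The key "hazard" inequality for the primitive of a logconcave density. -/
lemma ratio_F (hg : Continuous g) (hgpos : ∀ t ∈ Icc (0:ℝ) 1, 0 < g t)
    (hlc : ConcaveOn ℝ (Icc (0:ℝ) 1) (fun t => Real.log (g t)))
    {a x t : ℝ} (h0 : 0 ≤ a) (hax : a ≤ x) (hxt : x ≤ t) (h1 : t ≤ 1) :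
    g t * (∫ σ in a..x, g σ) ≤ g x * ∫ σ in a..t, g σ := by
  have hgx : 0 ≤ g x := le_of_lt (hgpos x ⟨h0.trans hax, hxt.trans h1⟩)
  have hshift : Continuous fun σ => g (σ + (t - x)) :=
    hg.comp (continuous_id.add continuous_const)
  have step1 : (∫ σ in a..x, g t * g σ) ≤ ∫ σ in a..x, g x * g (σ + (t - x)) := by
    apply intervalIntegral.integral_mono_on hax
      ((continuous_const.mul hg).intervalIntegrable a x)
      ((continuous_const.mul hshift).intervalIntegrable a x)
    intro σ hσ
    have h4 := four_point hlc hgpos (h0.trans hσ.1) h1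
      (le_add_of_nonneg_right (by linarith : (0:ℝ) ≤ t - x))
      (by linarith [hσ.2] : σ + (t - x) ≤ t)
    have he : σ + t - (σ + (t - x)) = x := by ring
    rw [he] at h4
    show g t * g σ ≤ g x * g (σ + (t - x))
    linarith [h4]
  rw [intervalIntegral.integral_const_mul, intervalIntegral.integral_const_mul] at step1
  have e1 : (∫ σ in a..x, g (σ + (t - x))) = ∫ σ in a + (t - x)..x + (t - x), g σ :=
    intervalIntegral.integral_comp_add_right g (t - x)
  have hxe : x + (t - x) = t := by ring
  rw [hxe] at e1
  have step2 : (∫ σ in a + (t - x)..t, g σ) ≤ ∫ σ in a..t, g σ := by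
    have hsplit : (∫ σ in a..t, g σ)
        = (∫ σ in a..a + (t - x), g σ) + ∫ σ in a + (t - x)..t, g σ :=
      (intervalIntegral.integral_add_adjacent_intervals
        (hg.intervalIntegrable _ _) (hg.intervalIntegrable _ _)).symm
    have hnn : 0 ≤ ∫ σ in a..a + (t - x), g σ := by
      apply intervalIntegral.integral_nonneg (by linarith)
      intro v hv
      exact le_of_lt (hgpos v ⟨by linarith [hv.1], by linarith [hv.2, hax]⟩)
    linarith
  calc g t * ∫ σ in a..x, g σ ≤ g x * ∫ σ in a..x, g (σ + (t - x)) := step1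
    _ = g x * ∫ σ in a + (t - x)..t, g σ := by rw [e1]
    _ ≤ g x * ∫ σ in a..t, g σ := mul_le_mul_of_nonneg_left step2 hgx

lemma primitive_eq (hg : Continuous g) (a x : ℝ) :
    (∫ t in a..x, (∫ σ in a..t, g σ)) = x * (∫ t in a..x, g t) - ∫ t in a..x, t * g t := by
  set F : ℝ → ℝ := fun v => ∫ t in a..v, g t with hF
  have hFd : ∀ v, HasDerivAt F (g v) v := fun v => (hg.integral_hasStrictDerivAt a v).hasDerivAt
  have hFc : Continuous F := continuous_iff_continuousAt.2 fun v => (hFd v).continuousAt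
  set φ : ℝ → ℝ := fun v => v * F v - ∫ t in a..v, t * g t with hφ
  have hφd : ∀ v, HasDerivAt φ (F v) v := by
    intro v
    have h1 : HasDerivAt (fun w : ℝ => w * F w) (1 * F v + v * g v) v :=
      (hasDerivAt_id v).mul (hFd v)
    have h2 : HasDerivAt (fun w => ∫ t in a..w, t * g t) (v * g v) v :=
      ((continuous_id.mul hg).integral_hasStrictDerivAt a v).hasDerivAt
    have := h1.sub h2
    exact this.congr_deriv (by ring)
  have hcalc := intervalIntegral.integral_eq_sub_of_hasDerivAt
    (f := φ) (f' := F) (a := a) (b := x) (fun t _ => hφd t) (hFc.intervalIntegrable a x)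
  rw [hcalc]
  simp [hφ, hF]

/-- Monotonicity of the distance from the conditional mean to the right endpoint,
for a logconcave density. -/
lemma delta_mono (hg : Continuous g) (hgpos : ∀ t ∈ Icc (0:ℝ) 1, 0 < g t)
    (hlc : ConcaveOn ℝ (Icc (0:ℝ) 1) (fun t => Real.log (g t)))
    {a x y : ℝ} (h0 : 0 ≤ a) (hax : a < x) (hxy : x ≤ y) (h1 : y ≤ 1) :
    x - condMean g a x ≤ y - condMean g a y := by
  have hx1 : x ≤ 1 := hxy.trans h1
  have hFd : ∀ v, HasDerivAt (fun w => ∫ t in a..w, g t) (g v) v := fun v =>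
    (hg.integral_hasStrictDerivAt a v).hasDerivAt
  have hFc : Continuous fun v => ∫ t in a..v, g t :=
    continuous_iff_continuousAt.2 fun v => (hFd v).continuousAt
  have hFx : 0 < ∫ t in a..x, g t := int_pos hg hgpos h0 hax hx1
  have hFy : 0 < ∫ t in a..y, g t := int_pos hg hgpos h0 (hax.trans_le hxy) h1
  have hgx : 0 < g x := hgpos x ⟨h0.trans hax.le, hx1⟩
  -- notation
  set F : ℝ → ℝ := fun v => ∫ t in a..v, g t with hF
  set B : ℝ → ℝ := fun v => ∫ t in a..v, F t with hB
  have hBx : B x = x * F x - ∫ t in a..x, t * g t := primitive_eq hg a x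
  have hBy : B y = y * F y - ∫ t in a..y, t * g t := primitive_eq hg a y
  have hxm : x - condMean g a x = B x / F x := by
    rw [condMean, hBx]
    rw [eq_div_iff hFx.ne', sub_mul, div_mul_cancel₀ _ hFx.ne']
  have hym : y - condMean g a y = B y / F y := by
    rw [condMean, hBy]
    rw [eq_div_iff hFy.ne', sub_mul, div_mul_cancel₀ _ hFy.ne']
  rw [hxm, hym, div_le_div_iff₀ hFx hFy]
  -- key inequalities
  have hFyx : F y - F x = ∫ t in x..y, g t := by
    have := intervalIntegral.integral_add_adjacent_intervals (μ := volume)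
      (hg.intervalIntegrable a x) (hg.intervalIntegrable x y)
    simp only [hF]; linarith
  have hByx : B y - B x = ∫ t in x..y, F t := by
    have := intervalIntegral.integral_add_adjacent_intervals (μ := volume)
      (hFc.intervalIntegrable a x) (hFc.intervalIntegrable x y)
    simp only [hB]; linarith
  have hFxy_nn : 0 ≤ F y - F x := by
    rw [hFyx]
    apply intervalIntegral.integral_nonneg hxy
    intro t ht
    exact le_of_lt (hgpos t ⟨by linarith [ht.1, hax], by linarith [ht.2]⟩)
  have i1 : g x * B x ≤ F x * F x := by
    have hmono : (∫ s in a..x, g x * F s) ≤ ∫ s in a..x, g s * F x := by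
      apply intervalIntegral.integral_mono_on hax.le
        ((continuous_const.mul hFc).intervalIntegrable a x)
        ((hg.mul continuous_const).intervalIntegrable a x)
      intro s hs
      exact ratio_F hg hgpos hlc h0 hs.1 hs.2 hx1
    rw [intervalIntegral.integral_const_mul, intervalIntegral.integral_mul_const] at hmono
    calc g x * B x = g x * ∫ s in a..x, F s := by rw [hB]
      _ ≤ (∫ s in a..x, g s) * F x := hmono
      _ = F x * F x := by rw [hF, mul_comm]
  have i2 : (F y - F x) * F x ≤ g x * (B y - B x) := by
    rw [hFyx, hByx]
    have hmono : (∫ t in x..y, g t * F x) ≤ ∫ t in x..y, g x * F t := by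
      apply intervalIntegral.integral_mono_on hxy
        ((hg.mul continuous_const).intervalIntegrable x y)
        ((continuous_const.mul hFc).intervalIntegrable x y)
      intro t ht
      exact ratio_F hg hgpos hlc h0 hax.le ht.1 (by linarith [ht.2])
    rw [intervalIntegral.integral_mul_const, intervalIntegral.integral_const_mul] at hmono
    exact hmono
  -- combine
  have h5 := mul_le_mul_of_nonneg_right i1 hFxy_nn
  have h6 := mul_le_mul_of_nonneg_left i2 hFx.le
  have h7 : g x * (B x * F y - B y * F x) ≤ 0 := by nlinarith [h5, h6]
  nlinarith [h7, hgx]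

/-- The core comparison lemma: for a logconcave positive density on `[0,1]` and
adjacent intervals `[p,q]`, `[q,r]`, if the left offset of the conditional mean of the
left interval is at most that of the right interval, then the same holds for the
right offsets. -/
lemma core_lemma (hg : Continuous g) (hgpos : ∀ t ∈ Icc (0:ℝ) 1, 0 < g t)
    (hlc : ConcaveOn ℝ (Icc (0:ℝ) 1) (fun t => Real.log (g t)))
    {p q r : ℝ} (h0 : 0 ≤ p) (hpq : p < q) (hqr : q < r) (h1 : r ≤ 1)
    (hyp : condMean g p q - p ≤ condMean g q r - q) :
    q - condMean g p q ≤ r - condMean g q r := by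
  have hq1 : q ≤ 1 := by linarith
  have step1 : q - p ≤ r - q := by
    by_contra hcon
    push_neg at hcon
    have hshift := shift_mean hg hgpos hlc (a := p) (b := p + (r - q)) (δ := q - p)
      h0 (by linarith) (by linarith) (by linarith : p + (r - q) + (q - p) ≤ 1)
    rw [show p + (q - p) = q by ring, show p + (r - q) + (q - p) = r by ring] at hshift
    have hmono := mean_strict_right hg hgpos h0 (by linarith : p < p + (r - q))
      (by linarith : p + (r - q) < q) hq1
    linarith
  have hq2 : q + (q - p) ≤ r := by linarith
  have hc2 : condMean g q (q + (q - p)) - q ≤ condMean g p q - p := by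
    have hshift := shift_mean hg hgpos hlc (a := p) (b := q) (δ := q - p) h0 hpq
      (by linarith) (by linarith : q + (q - p) ≤ 1)
    rw [show p + (q - p) = q by ring] at hshift
    linarith
  have hdm := delta_mono hg hgpos hlc (a := q) (x := q + (q - p)) (y := r)
    (by linarith : (0:ℝ) ≤ q) (by linarith) hq2 h1
  linarith

end Auxiliary

/-- single-dipped interleaved widths in a logconcave environment. -/
theorem stmt_2 (f u : ℝ → ℝ) (N : ℕ) (hN : 2 ≤ N)
    (hf_cont : Continuous f) (hf_pos : ∀ t ∈ Icc (0:ℝ) 1, 0 < f t)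
    (hf_prob : (∫ t in (0:ℝ)..1, f t) = 1)
    (hu : ContDiff ℝ 2 u)
    (hu'' : ∀ t ∈ Icc (0:ℝ) 1, 0 < deriv (deriv u) t)
    (hf_lc : LogConcaveOn01 f) (hu_lc : LogConcaveOn01 (deriv (deriv u)))
    (s x : ℕ → ℝ) (hds : DualSystem f (deriv (deriv u)) N s x) :
    ∀ i, 2 ≤ i → i ≤ 2 * N - 2 →
      interleaved s x (i - 1) ≤ interleaved s x i →
      interleaved s x i ≤ interleaved s x (i + 1) := by
  obtain ⟨hs0, hsN, hmono, hxdef, hsdef⟩ := hds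
  -- continuity of the second derivative
  have hw_cont : Continuous (deriv (deriv u)) := by
    have h2 : ContDiff ℝ ((1:ℕ∞) + 1) u := by exact_mod_cast hu
    have hd1 : ContDiff ℝ ((1:ℕ∞)) (deriv u) := (contDiff_succ_iff_deriv.mp h2).2.2
    exact hd1.continuous_deriv le_rfl
  set w : ℝ → ℝ := deriv (deriv u) with hw
  -- monotonicity of s
  have smono : ∀ j k : ℕ, j ≤ k → k ≤ N → s j ≤ s k := by
    have haux : ∀ d : ℕ, ∀ j : ℕ, j + d ≤ N → s j ≤ s (j + d) := by
      intro d
      induction d with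
      | zero => intro j _; simp
      | succ n ih =>
        intro j h
        have h1 : s j ≤ s (j + n) := ih j (by omega)
        have h2 : s (j + n) < s (j + n + 1) := hmono (j + n) (by omega)
        have he : j + (n + 1) = j + n + 1 := by omega
        rw [he]
        linarith
    intro j k hjk hkN
    have := haux (k - j) j (by omega)
    rwa [show j + (k - j) = k by omega] at this
  have sbound : ∀ k : ℕ, k ≤ N → 0 ≤ s k ∧ s k ≤ 1 := by
    intro k hk
    constructor
    · have := smono 0 k (Nat.zero_le k) hk; rw [hs0] at this; linarith
    · have := smono k N hk le_rfl; rw [hsN] at this; linarith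
  -- strict bounds for x k
  have hxlt : ∀ k : ℕ, 1 ≤ k → k ≤ N → s (k - 1) < x k ∧ x k < s k := by
    intro k hk1 hkN
    have hlt : s (k - 1) < s k := by
      have := hmono (k - 1) (by omega)
      rwa [show k - 1 + 1 = k by omega] at this
    have hb0 : 0 ≤ s (k - 1) := (sbound (k - 1) (by omega)).1
    have hb1 : s k ≤ 1 := (sbound k hkN).2
    rw [hxdef k hk1 hkN]
    exact ⟨mean_gt hf_cont hf_pos hb0 hlt hb1, mean_lt hf_cont hf_pos hb0 hlt hb1⟩
  intro i hi2 hiN hle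
  rcases Nat.even_or_odd i with ⟨k, hk⟩ | ⟨k, hk⟩
  · -- even case: i = 2k, 1 ≤ k ≤ N - 1
    have hik : i = 2 * k := by omega
    have hk1 : 1 ≤ k := by omega
    have hkN : k + 1 ≤ N := by omega
    -- identify interleaved values
    have e1 : interleaved s x (i - 1) = s k - s (k - 1) := by
      rw [interleaved, if_pos (by omega : (i - 1) % 2 = 1)]
      congr 2 <;> omega
    have e2 : interleaved s x i = x (k + 1) - x k := by
      rw [interleaved, if_neg (by omega : ¬ i % 2 = 1)]
      congr 2 <;> omega
    have e3 : interleaved s x (i + 1) = s (k + 1) - s k := by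
      rw [interleaved, if_pos (by omega : (i + 1) % 2 = 1)]
      congr 2 <;> omega
    rw [e1, e2] at hle
    rw [e2, e3]
    have hxk := hxdef k hk1 (by omega)
    have hxk1 := hxdef (k + 1) (by omega) hkN
    rw [show k + 1 - 1 = k by omega] at hxk1
    have hpq : s (k - 1) < s k := by
      have := hmono (k - 1) (by omega); rwa [show k - 1 + 1 = k by omega] at this
    have hqr : s k < s (k + 1) := hmono k (by omega)
    have hcore := core_lemma hf_cont hf_pos hf_lc
      (p := s (k - 1)) (q := s k) (r := s (k + 1))
      ((sbound (k - 1) (by omega)).1) hpq hqr ((sbound (k + 1) hkN).2)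
      (by rw [← hxk, ← hxk1]; linarith)
    rw [← hxk, ← hxk1] at hcore
    linarith
  · -- odd case: i = 2k + 1, 1 ≤ k ≤ N - 2
    have hik : i = 2 * k + 1 := by omega
    have hk1 : 1 ≤ k := by omega
    have hkN : k + 2 ≤ N := by omega
    have e1 : interleaved s x (i - 1) = x (k + 1) - x k := by
      rw [interleaved, if_neg (by omega : ¬ (i - 1) % 2 = 1)]
      congr 2 <;> omega
    have e2 : interleaved s x i = s (k + 1) - s k := by
      rw [interleaved, if_pos (by omega : i % 2 = 1)]
      congr 2 <;> omega
    have e3 : interleaved s x (i + 1) = x (k + 2) - x (k + 1) := by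
      rw [interleaved, if_neg (by omega : ¬ (i + 1) % 2 = 1)]
      congr 2 <;> omega
    rw [e1, e2] at hle
    rw [e2, e3]
    have hsk := hsdef k hk1 (by omega)
    have hsk1 := hsdef (k + 1) (by omega) (by omega)
    -- ordering of the x's
    have hb1 := hxlt k hk1 (by omega)
    have hb2 := hxlt (k + 1) (by omega) (by omega)
    have hb3 := hxlt (k + 2) (by omega) hkN
    rw [show k + 1 - 1 = k by omega] at hb2
    rw [show k + 2 - 1 = k + 1 by omega] at hb3
    have hx12 : x k < x (k + 1) := lt_trans hb1.2 hb2.1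
    have hx23 : x (k + 1) < x (k + 2) := lt_trans hb2.2 hb3.1
    have hx0 : 0 ≤ x k := by
      have := (sbound (k - 1) (by omega)).1; linarith [hb1.1]
    have hx1b : x (k + 2) ≤ 1 := by
      have := (sbound (k + 2) hkN).2; linarith [hb3.2]
    have hcore := core_lemma hw_cont hu'' hu_lc
      (p := x k) (q := x (k + 1)) (r := x (k + 2))
      hx0 hx12 hx23 hx1b
      (by rw [← hsk, ← hsk1]; linarith)
    rw [← hsk, ← hsk1] at hcore
    linarith
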